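/- Let k be a field with char k ≠ 2, let k₀₀, k₀₁, k₁₀, k₁₁ ∈ k, and let F = S + 2k₀₀P + k₀₁Q₀₁ + k₁₀Q₁₀ + k₁₁Q₁₁. Suppose there is a point (ϑ₀₀, ϑ₀₁, ϑ₁₀, ϑ₁₁) ∈ k⁴ with ϑ₀₀ϑ₀₁ϑ₁₀ϑ₁₁ ≠ 0, ϑ₀₀²ϑ₀₁² ≠ ϑ₁₀²ϑ₁₁², ϑ₀₀²ϑ₁₀² ≠ ϑ₀₁²ϑ₁₁² and ϑ₀₀²ϑ₁₁² ≠ ϑ₀₁²ϑ₁₀², at which all four partial derivatives of F vanish. Then the coefficients satisfy the cubic relationship 4 + k₀₁k₁₀k₁₁ − k₀₁² − k₁₀² − k₁₁² + k₀₀² = 0. -/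
import Mathlib


open MvPolynomial

/-- `S = x₀₀⁴+x₀₁⁴+x₁₀⁴+x₁₁⁴`, with variables `X 0 = x₀₀`, `X 1 = x₀₁`, `X 2 = x₁₀`,
`X 3 = x₁₁`. -/
noncomputable def S4 (k : Type*) [Field k] : MvPolynomial (Fin 4) k :=
  X 0 ^ 4 + X 1 ^ 4 + X 2 ^ 4 + X 3 ^ 4

/-- `P = x₀₀x₀₁x₁₀x₁₁`. -/
noncomputable def P4 (k : Type*) [Field k] : MvPolynomial (Fin 4) k :=
  X 0 * X 1 * X 2 * X 3

/-- `Q₀₁ = x₀₀²x₀₁² + x₁₀²x₁₁²`. -/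
noncomputable def Q01_4 (k : Type*) [Field k] : MvPolynomial (Fin 4) k :=
  X 0 ^ 2 * X 1 ^ 2 + X 2 ^ 2 * X 3 ^ 2

/-- `Q₁₀ = x₀₀²x₁₀² + x₀₁²x₁₁²`. -/
noncomputable def Q10_4 (k : Type*) [Field k] : MvPolynomial (Fin 4) k :=
  X 0 ^ 2 * X 2 ^ 2 + X 1 ^ 2 * X 3 ^ 2

/-- `Q₁₁ = x₀₀²x₁₁² + x₀₁²x₁₀²`. -/
noncomputable def Q11_4 (k : Type*) [Field k] : MvPolynomial (Fin 4) k :=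
  X 0 ^ 2 * X 3 ^ 2 + X 1 ^ 2 * X 2 ^ 2

/-- The Kummer quartic `F = S + 2k₀₀P + k₀₁Q₀₁ + k₁₀Q₁₀ + k₁₁Q₁₁`. -/
noncomputable def KummerF {k : Type*} [Field k] (k00 k01 k10 k11 : k) :
    MvPolynomial (Fin 4) k :=
  S4 k + C (2 * k00) * P4 k + C k01 * Q01_4 k + C k10 * Q10_4 k + C k11 * Q11_4 k

set_option maxRecDepth 8000 in
set_option maxHeartbeats 4000000 in
private lemma kummer_aux {k : Type*} [Field k] (a b c d p k00 k01 k10 k11 : k)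
    (h2 : (2 : k) ≠ 0) (hp : p ≠ 0) (hp2 : p ^ 2 = a * b * c * d)
    (hu : a * b - c * d ≠ 0) (hv : a * c - b * d ≠ 0) (hw : a * d - b * c ≠ 0)
    (e1 : 2 * a ^ 2 + k00 * p + k01 * (a * b) + k10 * (a * c) + k11 * (a * d) = 0)
    (e2 : 2 * b ^ 2 + k00 * p + k01 * (a * b) + k10 * (b * d) + k11 * (b * c) = 0)
    (e3 : 2 * c ^ 2 + k00 * p + k01 * (c * d) + k10 * (a * c) + k11 * (b * c) = 0)
    (e4 : 2 * d ^ 2 + k00 * p + k01 * (c * d) + k10 * (b * d) + k11 * (a * d) = 0) :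
    4 + k01 * k10 * k11 - k01 ^ 2 - k10 ^ 2 - k11 ^ 2 + k00 ^ 2 = 0 := by
  have habcd : a * b * c * d ≠ 0 := hp2 ▸ pow_ne_zero 2 hp
  have h4 : (4 : k) ≠ 0 := by
    have := mul_ne_zero h2 h2; norm_num at this ⊢; exact this
  have hA : k01 * (a * b - c * d) = c ^ 2 + d ^ 2 - a ^ 2 - b ^ 2 := by
    apply mul_left_cancel₀ h2
    linear_combination e1 + e2 - e3 - e4
  have hB : k10 * (a * c - b * d) = b ^ 2 + d ^ 2 - a ^ 2 - c ^ 2 := by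
    apply mul_left_cancel₀ h2
    linear_combination e1 + e3 - e2 - e4
  have hC : k11 * (a * d - b * c) = b ^ 2 + c ^ 2 - a ^ 2 - d ^ 2 := by
    apply mul_left_cancel₀ h2
    linear_combination e1 + e4 - e2 - e3
  have hD : 2 * (k00 * p) = (-(a^2+b^2+c^2+d^2) - k01*(a*b+c*d) - k10*(a*c+b*d) - k11*(a*d+b*c)) := by
    apply mul_left_cancel₀ h2
    linear_combination e1 + e2 + e3 + e4
  have hM : 4 * (a * b * c * d) * (a*b-c*d)^2 * (a*c-b*d)^2 * (a*d-b*c)^2 ≠ 0 :=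
    mul_ne_zero (mul_ne_zero (mul_ne_zero (mul_ne_zero h4 habcd) (pow_ne_zero 2 hu)) (pow_ne_zero 2 hv)) (pow_ne_zero 2 hw)
  apply mul_right_cancel₀ hM
  rw [zero_mul]
  linear_combination (a^8*b^2*c^2*d^2 - 2*a^7*b^3*c^3*d + a^7*b^3*c^2*d^2*k01 - 2*a^7*b^3*c*d^3 + 2*a^7*b^2*c^3*d^2*k10 + 2*a^7*b^2*c^2*d^3*k11 + 2*a^7*b*c^3*d^3 + a^6*b^4*c^4 - 2*a^6*b^4*c^3*d*k01 + 5*a^6*b^4*c^2*d^2 - 2*a^6*b^4*c*d^3*k01 + a^6*b^4*d^4 - 4*a^6*b^3*c^4*d*k10 - 2*a^6*b^3*c^3*d^2*k11 - 2*a^6*b^3*c^2*d^3*k10 - 4*a^6*b^3*c*d^4*k11 - a^6*b^2*c^4*d^2 - 3*a^6*b^2*c^3*d^3*k01 + 4*a^6*b^2*c^3*d^3*k10*k11 - a^6*b^2*c^2*d^4 - 3*a^6*c^4*d^4 + a^5*b^5*c^4*k01 - 4*a^5*b^5*c^3*d + 4*a^5*b^5*c^2*d^2*k01 - 4*a^5*b^5*c*d^3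 + a^5*b^5*d^4*k01 + 2*a^5*b^4*c^5*k10 - 2*a^5*b^4*c^4*d*k11 + 4*a^5*b^4*c^3*d^2*k10 + 4*a^5*b^4*c^2*d^3*k11 - 2*a^5*b^4*c*d^4*k10 + 2*a^5*b^4*d^5*k11 - 4*a^5*b^3*c^5*d + 6*a^5*b^3*c^4*d^2*k01 - 8*a^5*b^3*c^4*d^2*k10*k11 - 2*a^5*b^3*c^3*d^3 + 6*a^5*b^3*c^2*d^4*k01 - 8*a^5*b^3*c^2*d^4*k10*k11 - 4*a^5*b^3*c*d^5 + 4*a^5*b*c^5*d^3 + 3*a^5*b*c^4*d^4*k01 - 4*a^5*b*c^4*d^4*k10*k11 + 4*a^5*b*c^3*d^5 - 2*a^5*c^5*d^4*k10 - 2*a^5*c^4*d^5*k11 + a^4*b^6*c^4 - 2*a^4*b^6*c^3*d*k01 + 5*a^4*b^6*c^2*d^2 - 2*a^4*b^6*c*d^3*k01 + a^4*b^6*d^4 + 2*a^4*b^5*c^5*k11 - 2*a^4*b^5*c^4*d*k10 + 4*a^4*b^5*c^3*d^2*k11 + 4*a^4*b^5*c^2*d^3*k10 - 2*a^4*b^5*c*d^4*k11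 + 2*a^4*b^5*d^5*k10 + 3*a^4*b^4*c^6 - 3*a^4*b^4*c^5*d*k01 + 4*a^4*b^4*c^5*d*k10*k11 + 7*a^4*b^4*c^4*d^2 - 12*a^4*b^4*c^3*d^3*k01 + 16*a^4*b^4*c^3*d^3*k10*k11 + 7*a^4*b^4*c^2*d^4 - 3*a^4*b^4*c*d^5*k01 + 4*a^4*b^4*c*d^5*k10*k11 + 3*a^4*b^4*d^6 + a^4*b^2*c^6*d^2 - 6*a^4*b^2*c^5*d^3*k01 + 8*a^4*b^2*c^5*d^3*k10*k11 - 7*a^4*b^2*c^4*d^4 - 6*a^4*b^2*c^3*d^5*k01 + 8*a^4*b^2*c^3*d^5*k10*k11 + a^4*b^2*c^2*d^6 + 4*a^4*b*c^6*d^3*k10 + 2*a^4*b*c^5*d^4*k11 + 2*a^4*b*c^4*d^5*k10 + 4*a^4*b*c^3*d^6*k11 - a^4*c^6*d^4 - a^4*c^5*d^5*k01 - a^4*c^4*d^6 - 2*a^3*b^7*c^3*d + a^3*b^7*c^2*d^2*k01 - 2*a^3*b^7*c*d^3 - 4*a^3*b^6*c^4*d*k11 - 2*a^3*b^6*c^3*d^2*k10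 - 2*a^3*b^6*c^2*d^3*k11 - 4*a^3*b^6*c*d^4*k10 - 4*a^3*b^5*c^5*d + 6*a^3*b^5*c^4*d^2*k01 - 8*a^3*b^5*c^4*d^2*k10*k11 - 2*a^3*b^5*c^3*d^3 + 6*a^3*b^5*c^2*d^4*k01 - 8*a^3*b^5*c^2*d^4*k10*k11 - 4*a^3*b^5*c*d^5 - 2*a^3*b^3*c^7*d + 3*a^3*b^3*c^6*d^2*k01 - 4*a^3*b^3*c^6*d^2*k10*k11 + 2*a^3*b^3*c^5*d^3 + 12*a^3*b^3*c^4*d^4*k01 - 16*a^3*b^3*c^4*d^4*k10*k11 + 2*a^3*b^3*c^3*d^5 + 3*a^3*b^3*c^2*d^6*k01 - 4*a^3*b^3*c^2*d^6*k10*k11 - 2*a^3*b^3*c*d^7 - 2*a^3*b^2*c^7*d^2*k10 + 2*a^3*b^2*c^6*d^3*k11 - 4*a^3*b^2*c^5*d^4*k10 - 4*a^3*b^2*c^4*d^5*k11 + 2*a^3*b^2*c^3*d^6*k10 - 2*a^3*b^2*c^2*d^7*k11 + 2*a^3*b*c^7*d^3 + 2*a^3*b*c^6*d^4*k01 + 4*a^3*b*c^5*d^5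 + 2*a^3*b*c^4*d^6*k01 + 2*a^3*b*c^3*d^7 + a^2*b^8*c^2*d^2 + 2*a^2*b^7*c^3*d^2*k11 + 2*a^2*b^7*c^2*d^3*k10 - a^2*b^6*c^4*d^2 - 3*a^2*b^6*c^3*d^3*k01 + 4*a^2*b^6*c^3*d^3*k10*k11 - a^2*b^6*c^2*d^4 + a^2*b^4*c^6*d^2 - 6*a^2*b^4*c^5*d^3*k01 + 8*a^2*b^4*c^5*d^3*k10*k11 - 7*a^2*b^4*c^4*d^4 - 6*a^2*b^4*c^3*d^5*k01 + 8*a^2*b^4*c^3*d^5*k10*k11 + a^2*b^4*c^2*d^6 - 2*a^2*b^3*c^7*d^2*k11 + 2*a^2*b^3*c^6*d^3*k10 - 4*a^2*b^3*c^5*d^4*k11 - 4*a^2*b^3*c^4*d^5*k10 + 2*a^2*b^3*c^3*d^6*k11 - 2*a^2*b^3*c^2*d^7*k10 - a^2*b^2*c^8*d^2 - a^2*b^2*c^7*d^3*k01 - 5*a^2*b^2*c^6*d^4 - 4*a^2*b^2*c^5*d^5*k01 - 5*a^2*b^2*c^4*d^6 - a^2*b^2*c^3*d^7*k01 - a^2*b^2*c^2*d^8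 + 2*a*b^7*c^3*d^3 + 4*a*b^5*c^5*d^3 + 3*a*b^5*c^4*d^4*k01 - 4*a*b^5*c^4*d^4*k10*k11 + 4*a*b^5*c^3*d^5 + 4*a*b^4*c^6*d^3*k11 + 2*a*b^4*c^5*d^4*k10 + 2*a*b^4*c^4*d^5*k11 + 4*a*b^4*c^3*d^6*k10 + 2*a*b^3*c^7*d^3 + 2*a*b^3*c^6*d^4*k01 + 4*a*b^3*c^5*d^5 + 2*a*b^3*c^4*d^6*k01 + 2*a*b^3*c^3*d^7 - 3*b^6*c^4*d^4 - 2*b^5*c^5*d^4*k11 - 2*b^5*c^4*d^5*k10 - b^4*c^6*d^4 - b^4*c^5*d^5*k01 - b^4*c^4*d^6) * hA + (-a^8*b^2*c^2*d^2 + 2*a^7*b^3*c^3*d + 2*a^7*b^3*c*d^3 + a^7*b^2*c^3*d^2*k10 - 2*a^7*b^2*c^2*d^3*k11 - 2*a^7*b*c^3*d^3 - a^6*b^4*c^4 - 3*a^6*b^4*c^2*d^2 - a^6*b^4*d^4 - 2*a^6*b^3*c^4*d*k10 + 6*a^6*b^3*c^3*d^2*k11 - 3*a^6*b^3*c^2*d^3*k10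 + 4*a^6*b^3*c*d^4*k11 + 7*a^6*b^2*c^4*d^2 + a^6*b^2*c^2*d^4 - 2*a^6*b*c^4*d^3*k10 + 3*a^6*c^4*d^4 + a^5*b^4*c^5*k10 - 6*a^5*b^4*c^4*d*k11 + 6*a^5*b^4*c^3*d^2*k10 - 12*a^5*b^4*c^2*d^3*k11 + 3*a^5*b^4*c*d^4*k10 - 2*a^5*b^4*d^5*k11 - 8*a^5*b^3*c^5*d - 6*a^5*b^3*c^3*d^3 + 4*a^5*b^3*c*d^5 + 4*a^5*b^2*c^5*d^2*k10 + 6*a^5*b^2*c^3*d^4*k10 - 8*a^5*b*c^5*d^3 - 4*a^5*b*c^3*d^5 + a^5*c^5*d^4*k10 + 2*a^5*c^4*d^5*k11 + a^4*b^6*c^4 + 3*a^4*b^6*c^2*d^2 + a^4*b^6*d^4 + 2*a^4*b^5*c^5*k11 - 3*a^4*b^5*c^4*d*k10 + 12*a^4*b^5*c^3*d^2*k11 - 6*a^4*b^5*c^2*d^3*k10 + 6*a^4*b^5*c*d^4*k11 - a^4*b^5*d^5*k10 + 3*a^4*b^4*c^6 + 9*a^4*b^4*c^4*d^2 - 9*a^4*b^4*c^2*d^4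 - 3*a^4*b^4*d^6 - 2*a^4*b^3*c^6*d*k10 - 12*a^4*b^3*c^4*d^3*k10 - 6*a^4*b^3*c^2*d^5*k10 + 7*a^4*b^2*c^6*d^2 + 9*a^4*b^2*c^4*d^4 - a^4*b^2*c^2*d^6 - 2*a^4*b*c^6*d^3*k10 - 6*a^4*b*c^5*d^4*k11 - 3*a^4*b*c^4*d^5*k10 - 4*a^4*b*c^3*d^6*k11 - a^4*c^6*d^4 + a^4*c^4*d^6 - 2*a^3*b^7*c^3*d - 2*a^3*b^7*c*d^3 - 4*a^3*b^6*c^4*d*k11 + 3*a^3*b^6*c^3*d^2*k10 - 6*a^3*b^6*c^2*d^3*k11 + 2*a^3*b^6*c*d^4*k10 - 4*a^3*b^5*c^5*d + 6*a^3*b^5*c^3*d^3 + 8*a^3*b^5*c*d^5 + 6*a^3*b^4*c^5*d^2*k10 + 12*a^3*b^4*c^3*d^4*k10 + 2*a^3*b^4*c*d^6*k10 - 2*a^3*b^3*c^7*d - 6*a^3*b^3*c^5*d^3 + 6*a^3*b^3*c^3*d^5 + 2*a^3*b^3*c*d^7 + a^3*b^2*c^7*d^2*k10 + 6*a^3*b^2*c^6*d^3*k11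 + 6*a^3*b^2*c^5*d^4*k10 + 12*a^3*b^2*c^4*d^5*k11 + 3*a^3*b^2*c^3*d^6*k10 + 2*a^3*b^2*c^2*d^7*k11 + 2*a^3*b*c^7*d^3 - 2*a^3*b*c^3*d^7 + a^2*b^8*c^2*d^2 + 2*a^2*b^7*c^3*d^2*k11 - a^2*b^7*c^2*d^3*k10 - a^2*b^6*c^4*d^2 - 7*a^2*b^6*c^2*d^4 - 6*a^2*b^5*c^4*d^3*k10 - 4*a^2*b^5*c^2*d^5*k10 + a^2*b^4*c^6*d^2 - 9*a^2*b^4*c^4*d^4 - 7*a^2*b^4*c^2*d^6 - 2*a^2*b^3*c^7*d^2*k11 - 3*a^2*b^3*c^6*d^3*k10 - 12*a^2*b^3*c^5*d^4*k11 - 6*a^2*b^3*c^4*d^5*k10 - 6*a^2*b^3*c^3*d^6*k11 - a^2*b^3*c^2*d^7*k10 - a^2*b^2*c^8*d^2 - 3*a^2*b^2*c^6*d^4 + 3*a^2*b^2*c^4*d^6 + a^2*b^2*c^2*d^8 + 2*a*b^7*c^3*d^3 + 2*a*b^6*c^3*d^4*k10 + 4*a*b^5*c^5*d^3 + 8*a*b^5*c^3*d^5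 + 4*a*b^4*c^6*d^3*k11 + 3*a*b^4*c^5*d^4*k10 + 6*a*b^4*c^4*d^5*k11 + 2*a*b^4*c^3*d^6*k10 + 2*a*b^3*c^7*d^3 - 2*a*b^3*c^3*d^7 - 3*b^6*c^4*d^4 - 2*b^5*c^5*d^4*k11 - b^5*c^4*d^5*k10 - b^4*c^6*d^4 + b^4*c^4*d^6) * hB + (a^8*b^2*c^2*d^2 - 2*a^7*b^3*c^3*d - 2*a^7*b^3*c*d^3 + a^7*b^2*c^2*d^3*k11 - 2*a^7*b*c^3*d^3 + a^6*b^4*c^4 + 3*a^6*b^4*c^2*d^2 + a^6*b^4*d^4 - 3*a^6*b^3*c^3*d^2*k11 - 2*a^6*b^3*c*d^4*k11 + 3*a^6*b^2*c^4*d^2 + 5*a^6*b^2*c^2*d^4 - 2*a^6*b*c^3*d^4*k11 + a^6*c^4*d^4 + 3*a^5*b^4*c^4*d*k11 + 6*a^5*b^4*c^2*d^3*k11 + a^5*b^4*d^5*k11 - 6*a^5*b^3*c^3*d^3 - 4*a^5*b^3*c*d^5 + 6*a^5*b^2*c^4*d^3*k11 + 4*a^5*b^2*c^2*d^5*k11 -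 4*a^5*b*c^3*d^5 + a^5*c^4*d^5*k11 - a^4*b^6*c^4 - 3*a^4*b^6*c^2*d^2 - a^4*b^6*d^4 - a^4*b^5*c^5*k11 - 6*a^4*b^5*c^3*d^2*k11 - 3*a^4*b^5*c*d^4*k11 - a^4*b^4*c^6 - 3*a^4*b^4*c^4*d^2 + 3*a^4*b^4*c^2*d^4 + a^4*b^4*d^6 - 6*a^4*b^3*c^5*d^2*k11 - 12*a^4*b^3*c^3*d^4*k11 - 2*a^4*b^3*c*d^6*k11 - 3*a^4*b^2*c^6*d^2 + 3*a^4*b^2*c^4*d^4 + 5*a^4*b^2*c^2*d^6 - 3*a^4*b*c^5*d^4*k11 - 2*a^4*b*c^3*d^6*k11 - a^4*c^6*d^4 + a^4*c^4*d^6 + 2*a^3*b^7*c^3*d + 2*a^3*b^7*c*d^3 + 2*a^3*b^6*c^4*d*k11 + 3*a^3*b^6*c^2*d^3*k11 + 4*a^3*b^5*c^5*d + 6*a^3*b^5*c^3*d^3 + 2*a^3*b^4*c^6*d*k11 + 12*a^3*b^4*c^4*d^3*k11 + 6*a^3*b^4*c^2*d^5*k11 + 2*a^3*b^3*c^7*d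 + 6*a^3*b^3*c^5*d^3 - 6*a^3*b^3*c^3*d^5 - 2*a^3*b^3*c*d^7 + 3*a^3*b^2*c^6*d^3*k11 + 6*a^3*b^2*c^4*d^5*k11 + a^3*b^2*c^2*d^7*k11 + 2*a^3*b*c^7*d^3 - 2*a^3*b*c^3*d^7 - a^2*b^8*c^2*d^2 - a^2*b^7*c^3*d^2*k11 - 5*a^2*b^6*c^4*d^2 - 3*a^2*b^6*c^2*d^4 - 4*a^2*b^5*c^5*d^2*k11 - 6*a^2*b^5*c^3*d^4*k11 - 5*a^2*b^4*c^6*d^2 - 3*a^2*b^4*c^4*d^4 + 3*a^2*b^4*c^2*d^6 - a^2*b^3*c^7*d^2*k11 - 6*a^2*b^3*c^5*d^4*k11 - 3*a^2*b^3*c^3*d^6*k11 - a^2*b^2*c^8*d^2 - 3*a^2*b^2*c^6*d^4 + 3*a^2*b^2*c^4*d^6 + a^2*b^2*c^2*d^8 + 2*a*b^7*c^3*d^3 + 2*a*b^6*c^4*d^3*k11 + 4*a*b^5*c^5*d^3 + 2*a*b^4*c^6*d^3*k11 + 3*a*b^4*c^4*d^5*k11 + 2*a*b^3*c^7*d^3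 - 2*a*b^3*c^3*d^7 - b^6*c^4*d^4 - b^5*c^5*d^4*k11 - b^4*c^6*d^4 + b^4*c^4*d^6) * hC
    + ((a*b-c*d)^2*(a*c-b*d)^2*(a*d-b*c)^2*(2*(k00*p) + (-(a^2+b^2+c^2+d^2) - k01*(a*b+c*d) - k10*(a*c+b*d) - k11*(a*d+b*c)))) * hD
    + (-4*k00^2*(a*b-c*d)^2*(a*c-b*d)^2*(a*d-b*c)^2) * hp2

/-- If the Kummer quartic `F` has a node `(ϑ₀₀, ϑ₀₁, ϑ₁₀, ϑ₁₁)` with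
`ϑ₀₀ϑ₀₁ϑ₁₀ϑ₁₁ ≠ 0`, `ϑ₀₀²ϑ₀₁² ≠ ϑ₁₀²ϑ₁₁²`, `ϑ₀₀²ϑ₁₀² ≠ ϑ₀₁²ϑ₁₁²`,
`ϑ₀₀²ϑ₁₁² ≠ ϑ₀₁²ϑ₁₀²`, then the coefficients satisfy the cubic relationship
`4 + k₀₁k₁₀k₁₁ − k₀₁² − k₁₀² − k₁₁² + k₀₀² = 0`. -/

theorem statement7 {k : Type*} [Field k] (hchar : ringChar k ≠ 2)
    (k00 k01 k10 k11 t00 t01 t10 t11 : k)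
    (hnz : t00 * t01 * t10 * t11 ≠ 0)
    (h01 : t00 ^ 2 * t01 ^ 2 ≠ t10 ^ 2 * t11 ^ 2)
    (h10 : t00 ^ 2 * t10 ^ 2 ≠ t01 ^ 2 * t11 ^ 2)
    (h11 : t00 ^ 2 * t11 ^ 2 ≠ t01 ^ 2 * t10 ^ 2)
    (hnode : ∀ z : Fin 4,
      eval ![t00, t01, t10, t11] (pderiv z (KummerF k00 k01 k10 k11)) = 0) :
    4 + k01 * k10 * k11 - k01 ^ 2 - k10 ^ 2 - k11 ^ 2 + k00 ^ 2 = 0 := by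
  have h2 : (2 : k) ≠ 0 := Ring.two_ne_zero hchar
  have ht00 : t00 ≠ 0 := fun h => hnz (by simp [h])
  have ht01 : t01 ≠ 0 := fun h => hnz (by simp [h])
  have ht10 : t10 ≠ 0 := fun h => hnz (by simp [h])
  have ht11 : t11 ≠ 0 := fun h => hnz (by simp [h])
  have h0 := hnode 0
  have h1 := hnode 1
  have h2' := hnode 2
  have h3 := hnode 3
  simp +decide [KummerF, S4, P4, Q01_4, Q10_4, Q11_4, pderiv_X, Pi.single_apply]
    at h0 h1 h2' h3
  have e1 : 2 * (t00 ^ 2) ^ 2 + k00 * (t00 * t01 * t10 * t11)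
      + k01 * (t00 ^ 2 * t01 ^ 2) + k10 * (t00 ^ 2 * t10 ^ 2)
      + k11 * (t00 ^ 2 * t11 ^ 2) = 0 := by
    apply mul_left_cancel₀ h2; linear_combination t00 * h0
  have e2 : 2 * (t01 ^ 2) ^ 2 + k00 * (t00 * t01 * t10 * t11)
      + k01 * (t00 ^ 2 * t01 ^ 2) + k10 * (t01 ^ 2 * t11 ^ 2)
      + k11 * (t01 ^ 2 * t10 ^ 2) = 0 := by
    apply mul_left_cancel₀ h2; linear_combination t01 * h1
  have e3 : 2 * (t10 ^ 2) ^ 2 + k00 * (t00 * t01 * t10 * t11)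
      + k01 * (t10 ^ 2 * t11 ^ 2) + k10 * (t00 ^ 2 * t10 ^ 2)
      + k11 * (t01 ^ 2 * t10 ^ 2) = 0 := by
    apply mul_left_cancel₀ h2; linear_combination t10 * h2'
  have e4 : 2 * (t11 ^ 2) ^ 2 + k00 * (t00 * t01 * t10 * t11)
      + k01 * (t10 ^ 2 * t11 ^ 2) + k10 * (t01 ^ 2 * t11 ^ 2)
      + k11 * (t00 ^ 2 * t11 ^ 2) = 0 := by
    apply mul_left_cancel₀ h2; linear_combination t11 * h3
  exact kummer_aux (t00 ^ 2) (t01 ^ 2) (t10 ^ 2) (t11 ^ 2)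
    (t00 * t01 * t10 * t11) k00 k01 k10 k11 h2 hnz (by ring)
    (sub_ne_zero.mpr h01) (sub_ne_zero.mpr h10) (sub_ne_zero.mpr h11)
    e1 e2 e3 e4
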